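/- Let φ : [1..n] → [1..m] be an injective, label-preserving map (S[i] = L[φ(i)] for all i) from positions of S to positions of L. Define the number of crossings of φ as the number of pairs i < i' with φ(i) > φ(i'). Then δ(S, L) is finite if and only if such a φ exists, and in that case δ(S, L) = (m − n) + min over all such φ of the number of crossings of φ. -/

import Mathlib

open scoped BigOperators

variable {α : Type*} [DecidableEq α]

/-- One correction step: insertion of a symbol at an arbitrary position,
or swap of two adjacent symbols. -/
inductive SIStep : List α → List α → Prop
  | insert (u v : List α) (a : α) : SIStep (u ++ v) (u ++ a :: v)
  | swap (u v : List α) (a b : α) : SIStep (u ++ a :: b :: v) (u ++ b :: a :: v)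

/-- There is a transformation from `S` to `L` using exactly `k` correction steps. -/
def SIReach (S L : List α) (k : ℕ) : Prop :=
  ∃ f : ℕ → List α, f 0 = S ∧ f k = L ∧ ∀ i < k, SIStep (f i) (f (i + 1))

/-- The Swap-Insert Correction distance: the minimum number of insertions and
adjacent swaps transforming `S` into `L`, or `⊤` if no such sequence exists. -/
noncomputable def SIDist (S L : List α) : ℕ∞ :=
  sInf {n : ℕ∞ | ∃ k : ℕ, n = (k : ℕ∞) ∧ SIReach S L k}

set_option linter.unusedSectionVars false
set_option maxHeartbeats 1000000

lemma sireach_refl (S : List α) : SIReach S S 0 := ⟨fun _ => S, rfl, rfl, by omega⟩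

lemma sireach_tail {S T U : List α} {k : ℕ} (h : SIReach S T k) (h2 : SIStep T U) :
    SIReach S U (k + 1) := by
  obtain ⟨f, h0, hk, hs⟩ := h
  refine ⟨fun i => if i ≤ k then f i else U, by simp [h0], by simp, ?_⟩
  intro i hi
  rcases Nat.lt_or_ge i k with h' | h'
  · simpa [Nat.le_of_lt h', Nat.succ_le_of_lt h'] using hs i h'
  · have : i = k := by omega
    subst this
    simpa [hk] using h2

lemma sireach_head {S T L : List α} {k : ℕ} (h2 : SIStep S T) (h : SIReach T L k) :
    SIReach S L (k + 1) := by
  obtain ⟨f, h0, hk, hs⟩ := h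
  refine ⟨fun i => match i with | 0 => S | (i+1) => f i, rfl, hk, ?_⟩
  intro i hi
  match i with
  | 0 => simpa [h0] using h2
  | (i+1) => exact hs i (by omega)

lemma sistep_cons {X Y : List α} (a : α) (h : SIStep X Y) : SIStep (a :: X) (a :: Y) := by
  cases h with
  | insert u v b => exact SIStep.insert (a :: u) v b
  | swap u v b c => exact SIStep.swap (a :: u) v b c

lemma sireach_cons {S L : List α} {k : ℕ} (a : α) (h : SIReach S L k) :
    SIReach (a :: S) (a :: L) k := by
  obtain ⟨f, h0, hk, hs⟩ := h
  exact ⟨fun i => a :: f i, by simp [h0], by simp [hk], fun i hi => sistep_cons a (hs i hi)⟩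

lemma sireach_of_sublist {S L : List α} (h : List.Sublist S L) :
    SIReach S L (L.length - S.length) := by
  induction h with
  | slnil => exact sireach_refl []
  | @cons l₁ l₂ a h ih =>
      have hl : l₁.length ≤ l₂.length := h.length_le
      have : l₂.length - l₁.length + 1 = (a :: l₂).length - l₁.length := by
        simp; omega
      rw [← this]
      exact sireach_tail ih (SIStep.insert [] l₂ a)
  | @cons_cons l₁ l₂ a h ih => simpa using sireach_cons a ih

def crossNum {n m : ℕ} (φ : Fin n → Fin m) : ℕ :=
  (Finset.univ.filter (fun p : Fin n × Fin n => p.1 < p.2 ∧ φ p.2 < φ p.1)).card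

lemma crossNum_comp_strictMono {n n' m : ℕ} (φ : Fin n' → Fin m) (ψ : Fin n → Fin n')
    (hψ : StrictMono ψ) : crossNum (φ ∘ ψ) ≤ crossNum φ := by
  apply Finset.card_le_card_of_injOn (fun p => (ψ p.1, ψ p.2))
  · intro p hp
    rw [Finset.mem_coe] at hp ⊢
    simp only [Finset.mem_filter, Finset.mem_univ, true_and] at hp ⊢
    exact ⟨hψ hp.1, hp.2⟩
  · intro p _ q _ h
    simp only [Prod.ext_iff] at h ⊢
    exact ⟨hψ.injective h.1, hψ.injective h.2⟩

lemma crossNum_comp_swap_le {n n' m : ℕ} (φ : Fin n' → Fin m) (ψ : Fin n → Fin n')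
    (j : ℕ) (hj : j + 1 < n)
    (hval : ∀ i : Fin n, (ψ i : ℕ) = if (i : ℕ) = j then j + 1 else if (i : ℕ) = j + 1 then j else i) :
    crossNum (φ ∘ ψ) ≤ crossNum φ + 1 := by
  classical
  have hψinj : Function.Injective ψ := by
    intro p q h
    have hp := hval p; have hq := hval q
    rw [h] at hp
    have := p.isLt; have := q.isLt
    apply Fin.ext
    split_ifs at hp hq <;> omega
  set F := (Finset.univ.filter (fun p : Fin n × Fin n => p.1 < p.2 ∧ (φ ∘ ψ) p.2 < (φ ∘ ψ) p.1)) with hF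
  set G := (Finset.univ.filter (fun p : Fin n' × Fin n' => p.1 < p.2 ∧ φ p.2 < φ p.1)) with hG
  have key : (F.erase (⟨j, by omega⟩, ⟨j+1, hj⟩)).card ≤ G.card := by
    apply Finset.card_le_card_of_injOn (fun p => (ψ p.1, ψ p.2))
    · intro p hp
      rw [Finset.mem_coe, Finset.mem_erase] at hp; rw [Finset.mem_coe]
      obtain ⟨hne, hp⟩ := hp
      simp only [hF, Finset.mem_filter, Finset.mem_univ, true_and, Function.comp] at hp
      simp only [hG, Finset.mem_filter, Finset.mem_univ, true_and]
      refine ⟨?_, hp.2⟩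
      have h1 := hval p.1; have h2 := hval p.2
      have hne' : ¬((p.1 : ℕ) = j ∧ (p.2 : ℕ) = j + 1) := by
        intro ⟨ha, hb⟩
        exact hne (by ext <;> simp [ha, hb])
      have hlt : (p.1 : ℕ) < (p.2 : ℕ) := hp.1
      have := p.1.isLt; have := p.2.isLt
      rw [Fin.lt_def]
      split_ifs at h1 h2 <;> omega
    · intro p _ q _ h
      simp only [Prod.ext_iff] at h ⊢
      exact ⟨hψinj h.1, hψinj h.2⟩
  have h2 : F.card ≤ (F.erase (⟨j, by omega⟩, ⟨j+1, hj⟩)).card + 1 := by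
    by_cases h : ((⟨j, by omega⟩ : Fin n), (⟨j+1, hj⟩ : Fin n)) ∈ F
    · rw [Finset.card_erase_of_mem h]; omega
    · rw [Finset.erase_eq_of_notMem h]; omega
  have eF : crossNum (φ ∘ ψ) = F.card := rfl
  have eG : crossNum φ = G.card := rfl
  omega

lemma crossNum_comp_swap_lt {n n' m : ℕ} (φ : Fin n' → Fin m) (ψ : Fin n → Fin n')
    (j : ℕ) (hj : j + 1 < n) (hj' : j + 1 < n')
    (hval : ∀ i : Fin n, (ψ i : ℕ) = if (i : ℕ) = j then j + 1 else if (i : ℕ) = j + 1 then j else i)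
    (hφ : φ ⟨j + 1, hj'⟩ < φ ⟨j, by omega⟩) :
    crossNum (φ ∘ ψ) < crossNum φ := by
  classical
  have hψinj : Function.Injective ψ := by
    intro p q h
    have hp := hval p; have hq := hval q
    rw [h] at hp
    have := p.isLt; have := q.isLt
    apply Fin.ext
    split_ifs at hp hq <;> omega
  set F := (Finset.univ.filter (fun p : Fin n × Fin n => p.1 < p.2 ∧ (φ ∘ ψ) p.2 < (φ ∘ ψ) p.1)) with hF
  set G := (Finset.univ.filter (fun p : Fin n' × Fin n' => p.1 < p.2 ∧ φ p.2 < φ p.1)) with hG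
  have hx : ((⟨j, by omega⟩ : Fin n'), (⟨j+1, hj'⟩ : Fin n')) ∈ G := by
    simp only [hG, Finset.mem_filter, Finset.mem_univ, true_and]
    exact ⟨by simp [Fin.lt_def], hφ⟩
  have key : F.card ≤ (G.erase (⟨j, by omega⟩, ⟨j+1, hj'⟩)).card := by
    apply Finset.card_le_card_of_injOn (fun p => (ψ p.1, ψ p.2))
    · intro p hp
      rw [Finset.mem_coe] at hp ⊢
      simp only [hF, Finset.mem_filter, Finset.mem_univ, true_and, Function.comp] at hp
      have h1 := hval p.1; have h2 := hval p.2
      have hlt : (p.1 : ℕ) < (p.2 : ℕ) := hp.1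
      have := p.1.isLt; have := p.2.isLt
      -- p ≠ (j, j+1)
      have hne' : ¬((p.1 : ℕ) = j ∧ (p.2 : ℕ) = j + 1) := by
        rintro ⟨ha, hb⟩
        have e1 : ψ p.1 = ⟨j + 1, hj'⟩ := by apply Fin.ext; rw [h1]; simp [ha]
        have e2 : ψ p.2 = ⟨j, by omega⟩ := by apply Fin.ext; rw [h2]; simp [hb]
        rw [e1, e2] at hp
        exact absurd (lt_trans hp.2 hφ) (lt_irrefl _)
      rw [Finset.mem_erase]
      constructor
      · intro hcon
        rw [Prod.ext_iff, Fin.ext_iff, Fin.ext_iff] at hcon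
        simp only at hcon
        split_ifs at h1 h2 <;> omega
      · simp only [hG, Finset.mem_filter, Finset.mem_univ, true_and]
        refine ⟨?_, hp.2⟩
        rw [Fin.lt_def]
        split_ifs at h1 h2 <;> omega
    · intro p _ q _ h
      simp only [Prod.ext_iff] at h ⊢
      exact ⟨hψinj h.1, hψinj h.2⟩
  have h3 := Finset.card_erase_lt_of_mem hx
  have eF : crossNum (φ ∘ ψ) = F.card := rfl
  have eG : crossNum φ = G.card := rfl
  omega

lemma insert_get (u v : List α) (a : α) (i : ℕ) (hi : i < (u ++ v).length)
    (h2 : (if i < u.length then i else i + 1) < (u ++ a :: v).length) :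
    (u ++ v)[i] = (u ++ a :: v)[if i < u.length then i else i + 1] := by
  simp only [List.getElem_append, List.length_append] at *
  split_ifs with h h' h'' <;> first
    | rfl
    | omega
    | (simp only [List.getElem_cons]; split_ifs <;> first | omega | (congr 1; omega))

lemma swap_get (u v : List α) (a b : α) (i : ℕ) (hi : i < (u ++ a :: b :: v).length)
    (h2 : (if i = u.length then u.length + 1 else if i = u.length + 1 then u.length else i)
        < (u ++ b :: a :: v).length) :
    (u ++ a :: b :: v)[i]
      = (u ++ b :: a :: v)[if i = u.length then u.length + 1
          else if i = u.length + 1 then u.length else i] := by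
  simp only [List.getElem_append, List.length_append, List.length_cons, List.getElem_cons] at *
  split_ifs <;> first
    | rfl
    | omega
    | (congr 1; omega)

lemma lower_step {S X L : List α} {k : ℕ} (st : SIStep S X)
    (IH : X.length ≤ L.length ∧
      ∃ φ : Fin X.length → Fin L.length, Function.Injective φ ∧
        (∀ i, X.get i = L.get (φ i)) ∧ (L.length - X.length) + crossNum φ ≤ k) :
    S.length ≤ L.length ∧
      ∃ φ : Fin S.length → Fin L.length, Function.Injective φ ∧
        (∀ i, S.get i = L.get (φ i)) ∧ (L.length - S.length) + crossNum φ ≤ k + 1 := by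
  obtain ⟨hlen, φ', hinj', hlab', hcnt'⟩ := IH
  cases st with
  | insert u v a =>
      have hlen2 : (u ++ v).length + 1 = (u ++ a :: v).length := by simp; omega
      refine ⟨by omega, ?_⟩
      have hψlt : ∀ i : Fin (u ++ v).length,
          (if (i : ℕ) < u.length then (i : ℕ) else (i : ℕ) + 1) < (u ++ a :: v).length := by
        intro i; have := i.isLt; simp only [List.length_append, List.length_cons] at *
        split_ifs <;> omega
      set ψ : Fin (u ++ v).length → Fin (u ++ a :: v).length :=
        fun i => ⟨if (i : ℕ) < u.length then (i : ℕ) else (i : ℕ) + 1, hψlt i⟩ with hψ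
      have hmono : StrictMono ψ := by
        intro i i' h
        rw [Fin.lt_def] at h ⊢
        simp only [hψ]
        split_ifs <;> omega
      refine ⟨φ' ∘ ψ, hinj'.comp hmono.injective, ?_, ?_⟩
      · intro i
        have h1 : (u ++ v).get i = (u ++ a :: v).get (ψ i) := by
          simp only [List.get_eq_getElem]
          exact insert_get u v a i i.isLt (hψlt i)
        rw [h1]; exact hlab' (ψ i)
      · have := crossNum_comp_strictMono φ' ψ hmono
        omega
  | swap u v a b =>
      have hlen2 : (u ++ a :: b :: v).length = (u ++ b :: a :: v).length := by simp
      refine ⟨by omega, ?_⟩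
      have hj : u.length + 1 < (u ++ a :: b :: v).length := by simp
      have hψlt : ∀ i : Fin (u ++ a :: b :: v).length,
          (if (i : ℕ) = u.length then u.length + 1
            else if (i : ℕ) = u.length + 1 then u.length else (i : ℕ)) < (u ++ b :: a :: v).length := by
        intro i; have := i.isLt; simp only [List.length_append, List.length_cons] at *
        split_ifs <;> omega
      set ψ : Fin (u ++ a :: b :: v).length → Fin (u ++ b :: a :: v).length :=
        fun i => ⟨if (i : ℕ) = u.length then u.length + 1
          else if (i : ℕ) = u.length + 1 then u.length else (i : ℕ), hψlt i⟩ with hψ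
      have hval : ∀ i : Fin (u ++ a :: b :: v).length, (ψ i : ℕ) =
          if (i : ℕ) = u.length then u.length + 1
          else if (i : ℕ) = u.length + 1 then u.length else (i : ℕ) := fun _ => rfl
      have hψinj : Function.Injective ψ := by
        intro p q h
        have hp := hval p; have hq := hval q
        rw [h] at hp
        have := p.isLt; have := q.isLt
        apply Fin.ext
        split_ifs at hp hq <;> omega
      refine ⟨φ' ∘ ψ, hinj'.comp hψinj, ?_, ?_⟩
      · intro i
        have h1 : (u ++ a :: b :: v).get i = (u ++ b :: a :: v).get (ψ i) := by
          simp only [List.get_eq_getElem]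
          exact swap_get u v a b i i.isLt (hψlt i)
        rw [h1]; exact hlab' (ψ i)
      · have := crossNum_comp_swap_le φ' ψ u.length hj hval
        omega

lemma lower (L : List α) : ∀ (k : ℕ) (S : List α), SIReach S L k →
    S.length ≤ L.length ∧
      ∃ φ : Fin S.length → Fin L.length, Function.Injective φ ∧
        (∀ i, S.get i = L.get (φ i)) ∧ (L.length - S.length) + crossNum φ ≤ k := by
  intro k
  induction k with
  | zero =>
      intro S h
      obtain ⟨f, h0, hk, -⟩ := h
      have : S = L := by rw [← h0, hk]
      subst this
      refine ⟨le_refl _, id, Function.injective_id, fun i => rfl, ?_⟩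
      have : crossNum (id : Fin S.length → Fin S.length) = 0 := by
        rw [crossNum, Finset.card_eq_zero, Finset.filter_eq_empty_iff]
        rintro p - ⟨h1, h2⟩
        exact absurd (h1.trans h2) (lt_irrefl _)
      omega
  | succ k IH =>
      intro S h
      obtain ⟨f, h0, hk, hs⟩ := h
      have st : SIStep S (f 1) := h0 ▸ hs 0 (by omega)
      have hr : SIReach (f 1) L k := ⟨fun i => f (i + 1), rfl, hk, fun i hi => hs (i+1) (by omega)⟩
      exact lower_step st (IH _ hr)
lemma upper (L : List α) : ∀ (c : ℕ) (S : List α) (φ : Fin S.length → Fin L.length),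
    Function.Injective φ → (∀ i, S.get i = L.get (φ i)) → crossNum φ = c →
    ∃ k, k ≤ (L.length - S.length) + c ∧ SIReach S L k := by
  intro c
  induction c using Nat.strong_induction_on with
  | _ c IHc =>
  intro S φ hinj hlab hc
  by_cases hadj : ∃ j, ∃ hj : j + 1 < S.length, φ ⟨j + 1, hj⟩ < φ ⟨j, by omega⟩
  · obtain ⟨j, hj, hφ⟩ := hadj
    have hdecomp : ∃ (u : List α) (a b : α) (v : List α),
        u.length = j ∧ S = u ++ a :: b :: v := by
      refine ⟨S.take j, S[j], S[j+1], S.drop (j+2), List.length_take_of_le (by omega), ?_⟩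
      conv_lhs => rw [← List.take_append_drop j S]
      congr 1
      rw [List.drop_eq_getElem_cons (by omega), List.drop_eq_getElem_cons hj]
    obtain ⟨u, a, b, v, hul, rfl⟩ := hdecomp
    subst hul
    have hlen' : (u ++ b :: a :: v).length = (u ++ a :: b :: v).length := by simp
    have st : SIStep (u ++ a :: b :: v) (u ++ b :: a :: v) := SIStep.swap u v a b
    have hj'' : u.length + 1 < (u ++ b :: a :: v).length := by simp
    have hψlt : ∀ i : Fin (u ++ b :: a :: v).length,
        (if (i : ℕ) = u.length then u.length + 1 else if (i : ℕ) = u.length + 1 then u.length else (i : ℕ)) < (u ++ a :: b :: v).length := by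
      intro i; have := i.isLt
      simp only [List.length_append, List.length_cons] at *
      split_ifs <;> omega
    set ψ : Fin (u ++ b :: a :: v).length → Fin (u ++ a :: b :: v).length :=
      fun i => ⟨if (i : ℕ) = u.length then u.length + 1 else if (i : ℕ) = u.length + 1 then u.length else (i : ℕ), hψlt i⟩
      with hψ
    have hval : ∀ i : Fin (u ++ b :: a :: v).length, (ψ i : ℕ) =
        if (i : ℕ) = u.length then u.length + 1 else if (i : ℕ) = u.length + 1 then u.length else (i : ℕ) := fun _ => rfl
    have hψinj : Function.Injective ψ := by
      intro p q h
      have hp := hval p; have hq := hval q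
      rw [h] at hp
      have := p.isLt; have := q.isLt
      apply Fin.ext
      split_ifs at hp hq <;> omega
    have hlab2 : ∀ i : Fin (u ++ b :: a :: v).length, (u ++ b :: a :: v).get i = L.get ((φ ∘ ψ) i) := by
      intro i
      have h1 : (u ++ b :: a :: v).get i = (u ++ a :: b :: v).get (ψ i) := by
        simp only [List.get_eq_getElem]
        exact swap_get u v b a i i.isLt (hψlt i)
      rw [h1]; exact hlab (ψ i)
    have hcross : crossNum (φ ∘ ψ) < c := by
      rw [← hc]
      exact crossNum_comp_swap_lt φ ψ u.length hj'' (by simp) hval hφ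
    obtain ⟨k, hk1, hk2⟩ := IHc (crossNum (φ ∘ ψ)) hcross (u ++ b :: a :: v) (φ ∘ ψ)
      (hinj.comp hψinj) hlab2 rfl
    refine ⟨k + 1, ?_, sireach_head st hk2⟩
    simp only [List.length_append, List.length_cons] at hk1 ⊢
    omega
  · push_neg at hadj
    have hmono : StrictMono φ := by
      have adj : ∀ (j : ℕ) (hj : j + 1 < S.length), φ ⟨j, by omega⟩ < φ ⟨j + 1, hj⟩ := by
        intro j hj
        refine lt_of_le_of_ne (hadj j hj) (fun h => ?_)
        have := hinj h
        rw [Fin.ext_iff] at this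
        simp at this
      have key : ∀ (d : ℕ) (i i' : Fin S.length), (i' : ℕ) = (i : ℕ) + d + 1 → φ i < φ i' := by
        intro d
        induction d with
        | zero =>
            intro i i' h
            have hj : (i : ℕ) + 1 < S.length := h ▸ i'.isLt
            have he : i' = ⟨(i : ℕ) + 1, hj⟩ := Fin.ext h
            rw [he]
            exact adj (i : ℕ) hj
        | succ d IHd =>
            intro i i' h
            have hmid : (i : ℕ) + d + 1 < S.length := by have := i'.isLt; omega
            refine lt_trans (IHd i ⟨(i : ℕ) + d + 1, hmid⟩ rfl) ?_
            have hj : ((i : ℕ) + d + 1) + 1 < S.length := by have := i'.isLt; omega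
            have he : i' = ⟨((i : ℕ) + d + 1) + 1, hj⟩ :=
              Fin.ext (show (i' : ℕ) = (i : ℕ) + d + 1 + 1 by omega)
            rw [he]
            exact adj ((i : ℕ) + d + 1) hj
      intro i i' h
      rw [Fin.lt_def] at h
      exact key ((i' : ℕ) - (i : ℕ) - 1) i i' (by omega)
    have hsub : List.Sublist S L := by
      rw [List.sublist_iff_exists_fin_orderEmbedding_get_eq]
      exact ⟨OrderEmbedding.ofStrictMono φ hmono, hlab⟩
    exact ⟨L.length - S.length, by omega, sireach_of_sublist hsub⟩


/-- `δ(S, L)` is finite iff there is an injective, label-preserving map `φ`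
from positions of `S` to positions of `L`, and in that case
`δ(S, L) = (|L| - |S|) +` the minimum number of crossings over all such `φ`,
where a crossing is a pair `i < i'` with `φ i > φ i'`. -/
theorem dist_eq_min_crossings (S L : List α) :
    (SIDist S L ≠ ⊤ ↔
      ∃ φ : Fin S.length → Fin L.length,
        Function.Injective φ ∧ ∀ i, S.get i = L.get (φ i)) ∧
    (SIDist S L ≠ ⊤ →
      SIDist S L = ((L.length - S.length : ℕ) : ℕ∞) +
        sInf {c : ℕ∞ | ∃ φ : Fin S.length → Fin L.length,
          Function.Injective φ ∧ (∀ i, S.get i = L.get (φ i)) ∧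
          c = ((Finset.univ.filter
              (fun p : Fin S.length × Fin S.length =>
                p.1 < p.2 ∧ φ p.2 < φ p.1)).card : ℕ∞)}) := by
  classical
  set A := {k : ℕ | SIReach S L k} with hA
  have hAiff : A.Nonempty ↔ ∃ φ : Fin S.length → Fin L.length,
      Function.Injective φ ∧ ∀ i, S.get i = L.get (φ i) := by
    constructor
    · rintro ⟨k, hk⟩
      obtain ⟨-, φ, h1, h2, -⟩ := lower L k S hk
      exact ⟨φ, h1, h2⟩
    · rintro ⟨φ, h1, h2⟩
      obtain ⟨k, -, hk⟩ := upper L (crossNum φ) S φ h1 h2 rfl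
      exact ⟨k, hk⟩
  have hdist_top : ¬A.Nonempty → SIDist S L = ⊤ := by
    intro h
    rw [SIDist]
    refine sInf_eq_top.mpr ?_
    rintro n ⟨k, -, hk⟩
    exact (h ⟨k, hk⟩).elim
  have hdist_coe : A.Nonempty → SIDist S L = ((sInf A : ℕ) : ℕ∞) := by
    intro h
    apply le_antisymm
    · exact sInf_le ⟨sInf A, rfl, Nat.sInf_mem h⟩
    · apply le_sInf
      rintro n ⟨k, rfl, hk⟩
      exact_mod_cast Nat.sInf_le hk
  constructor
  · constructor
    · intro hne
      rw [← hAiff]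
      by_contra h
      exact hne (hdist_top h)
    · intro h
      rw [hdist_coe (hAiff.mpr h)]
      exact ENat.coe_ne_top _
  · intro hne
    have hA' : A.Nonempty := by by_contra h; exact hne (hdist_top h)
    set B := {c : ℕ | ∃ φ : Fin S.length → Fin L.length,
      Function.Injective φ ∧ (∀ i, S.get i = L.get (φ i)) ∧ c = crossNum φ} with hB
    have hB' : B.Nonempty := by
      obtain ⟨φ, h1, h2⟩ := hAiff.mp hA'
      exact ⟨crossNum φ, φ, h1, h2, rfl⟩
    have hinf : sInf {c : ℕ∞ | ∃ φ : Fin S.length → Fin L.length,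
          Function.Injective φ ∧ (∀ i, S.get i = L.get (φ i)) ∧
          c = ((Finset.univ.filter
              (fun p : Fin S.length × Fin S.length =>
                p.1 < p.2 ∧ φ p.2 < φ p.1)).card : ℕ∞)} = ((sInf B : ℕ) : ℕ∞) := by
      apply le_antisymm
      · obtain ⟨φ, h1, h2, h3⟩ := Nat.sInf_mem hB'
        exact sInf_le ⟨φ, h1, h2, by rw [h3]; rfl⟩
      · apply le_sInf
        rintro n ⟨φ, h1, h2, rfl⟩
        have hm : crossNum φ ∈ B := ⟨φ, h1, h2, rfl⟩
        exact_mod_cast Nat.sInf_le hm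
    rw [hdist_coe hA', hinf]
    have harith : sInf A = (L.length - S.length) + sInf B := by
      apply le_antisymm
      · obtain ⟨φ, h1, h2, h3⟩ := Nat.sInf_mem hB'
        obtain ⟨k, hk1, hk2⟩ := upper L (crossNum φ) S φ h1 h2 rfl
        have hle := Nat.sInf_le (show k ∈ A from hk2)
        omega
      · obtain ⟨hnm, φ, h1, h2, h3⟩ := lower L (sInf A) S (Nat.sInf_mem hA')
        have hle : sInf B ≤ crossNum φ := Nat.sInf_le ⟨φ, h1, h2, rfl⟩
        omega
    rw [harith]
    push_cast
    rfl
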